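/- Let δ > 0, T > δ, D̃ > 0, and E_S, E_F, E_B > 0. Then the function U_E(g) = D̃/(E_S + (g·T·e^{2gδ}/(g·T·e^{gδ} + 1))·E_F + (1 + (g·T − 1)·e^{gδ})·E_B) is strictly decreasing on (0,∞). -/

import Mathlib

lemma csma_aux_mono (δ T : ℝ) (hδ : δ > 0) (hT : T > δ) :
    StrictMonoOn (fun g : ℝ => (g * T - 1) * Real.exp (g * δ)) (Set.Ici 0) := by
  apply strictMonoOn_of_deriv_pos (convex_Ici 0)
  · fun_prop
  · intro g hg
    rw [interior_Ici] at hg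
    have hg' : (0:ℝ) < g := hg
    have hd : HasDerivAt (fun g : ℝ => (g * T - 1) * Real.exp (g * δ))
        (T * Real.exp (g * δ) + (g * T - 1) * (Real.exp (g * δ) * δ)) g := by
      have h1 : HasDerivAt (fun g : ℝ => g * T - 1) T g := by
        simpa using ((hasDerivAt_id g).mul_const T).sub_const 1
      have h2 : HasDerivAt (fun g : ℝ => Real.exp (g * δ)) (Real.exp (g * δ) * δ) g :=
        by simpa using ((hasDerivAt_id g).mul_const δ).exp
      exact h1.mul h2
    rw [hd.deriv]
    have he := Real.exp_pos (g * δ)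
    nlinarith [mul_pos (mul_pos hg' (hδ.trans hT)) hδ]

theorem csma_energy_efficiency_strictly_decreasing
    (δ T D E_S E_F E_B : ℝ) (hδ : δ > 0) (hT : T > δ) (hD : D > 0)
    (hES : E_S > 0) (hEF : E_F > 0) (hEB : E_B > 0) :
    StrictAntiOn
      (fun g : ℝ => D / (E_S
        + (g * T * Real.exp (2 * g * δ) / (g * T * Real.exp (g * δ) + 1)) * E_F
        + (1 + (g * T - 1) * Real.exp (g * δ)) * E_B))
      (Set.Ioi (0:ℝ)) := by
  have hT0 : (0:ℝ) < T := hδ.trans hT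
  have key := csma_aux_mono δ T hδ hT
  intro a ha b hb hab
  have ha' : (0:ℝ) < a := ha
  have hb' : (0:ℝ) < b := hb
  simp only
  -- second term strictly increasing
  set A := a * T * Real.exp (a * δ) with hA
  set B := b * T * Real.exp (b * δ) with hB
  have hA0 : 0 < A := by positivity
  have hB0 : 0 < B := by positivity
  have hAB : A < B := by
    apply mul_lt_mul' (by nlinarith) (Real.exp_lt_exp.mpr (by nlinarith)) (le_of_lt (Real.exp_pos _)) (by positivity)
  have hfrac : A / (A + 1) < B / (B + 1) := by
    rw [div_lt_div_iff₀ (by linarith) (by linarith)]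
    nlinarith
  have hexp : Real.exp (a * δ) < Real.exp (b * δ) := Real.exp_lt_exp.mpr (by nlinarith)
  have hrw1 : a * T * Real.exp (2 * a * δ) / (a * T * Real.exp (a * δ) + 1)
      = A / (A + 1) * Real.exp (a * δ) := by
    rw [hA]
    rw [show (2:ℝ) * a * δ = a * δ + a * δ by ring, Real.exp_add]
    field_simp
  have hrw2 : b * T * Real.exp (2 * b * δ) / (b * T * Real.exp (b * δ) + 1)
      = B / (B + 1) * Real.exp (b * δ) := by
    rw [hB]
    rw [show (2:ℝ) * b * δ = b * δ + b * δ by ring, Real.exp_add]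
    field_simp
  have hterm2 : a * T * Real.exp (2 * a * δ) / (a * T * Real.exp (a * δ) + 1) * E_F
      < b * T * Real.exp (2 * b * δ) / (b * T * Real.exp (b * δ) + 1) * E_F := by
    rw [hrw1, hrw2]
    apply mul_lt_mul_of_pos_right _ hEF
    apply mul_lt_mul' hfrac.le hexp (le_of_lt (Real.exp_pos _))
    positivity
  have hterm2pos : 0 ≤ a * T * Real.exp (2 * a * δ) / (a * T * Real.exp (a * δ) + 1) * E_F := by
    rw [hrw1]; positivity
  -- third term strictly increasing and positive
  have h3mono : (a * T - 1) * Real.exp (a * δ) < (b * T - 1) * Real.exp (b * δ) :=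
    key (le_of_lt ha') (le_of_lt hb') hab
  have h3low : (-1 : ℝ) < (a * T - 1) * Real.exp (a * δ) := by
    have h0 := key Set.self_mem_Ici (le_of_lt ha') ha'
    simpa using h0
  have hpos_a : 0 < E_S + a * T * Real.exp (2 * a * δ) / (a * T * Real.exp (a * δ) + 1) * E_F
      + (1 + (a * T - 1) * Real.exp (a * δ)) * E_B := by
    have : 0 < (1 + (a * T - 1) * Real.exp (a * δ)) * E_B := by
      apply mul_pos (by linarith) hEB
    linarith
  have hterm3 : (1 + (a * T - 1) * Real.exp (a * δ)) * E_B
      < (1 + (b * T - 1) * Real.exp (b * δ)) * E_B := by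
    apply mul_lt_mul_of_pos_right (by linarith) hEB
  have hden : E_S + a * T * Real.exp (2 * a * δ) / (a * T * Real.exp (a * δ) + 1) * E_F
      + (1 + (a * T - 1) * Real.exp (a * δ)) * E_B
      < E_S + b * T * Real.exp (2 * b * δ) / (b * T * Real.exp (b * δ) + 1) * E_F
      + (1 + (b * T - 1) * Real.exp (b * δ)) * E_B := by
    linarith
  exact div_lt_div_of_pos_left hD hpos_a hden
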